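/- Fix β > 1 + 1/(α−d) and set λ_t = (log t)^{−β}. Almost surely there exists t₀ such that whenever t₀ ≤ t₁ ≤ t₂ satisfy Z^{(1)}_{t₁} = Z^{(1)}_{t₂} and the inequality Φ_t(Z^{(1)}_t) − Φ_t(Z^{(2)}_t) ≥ (1/2) a_t λ_t holds at t = t₁ and at t = t₂, then Φ_t(Z^{(1)}_t) − Φ_t(Z^{(2)}_t) ≥ (1/2) a_t λ_t holds for all t ∈ [t₁, t₂]. -/

import Mathlib

open MeasureTheory Filter Real Set ProbabilityTheory

noncomputable section

/-- The `ℓ¹`-norm of a lattice point, as a real number. -/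
def lnorm {d : ℕ} (z : Fin d → ℤ) : ℝ := ∑ i, |(z i : ℝ)|

/-- The number of nearest-neighbour lattice paths of length `‖z‖₁` from the origin to `z`. -/
def numPaths (d : ℕ) (z : Fin d → ℤ) : ℕ :=
  Set.ncard {p : Fin (∑ i, (z i).natAbs + 1) → (Fin d → ℤ) |
    p 0 = 0 ∧ p (Fin.last _) = z ∧
    ∀ i : Fin (∑ i, (z i).natAbs), (∑ j, ((p i.succ j) - (p i.castSucc j)).natAbs) = 1}

/-- `η(z)`: the logarithm of the number of paths of length `‖z‖₁` from `0` to `z`. -/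
def pathEntropy {d : ℕ} (z : Fin d → ℤ) : ℝ := Real.log (numPaths d z)

/-- The functional `Φ_t` associated with a potential `ξ`:
`Φ_t(z) = ξ(z) - (|z|/t) log ξ(z) + η(z)/t` if `t ξ(z) ≥ |z|`, and `0` otherwise. -/
def Phi {d : ℕ} (ξ : (Fin d → ℤ) → ℝ) (t : ℝ) (z : Fin d → ℤ) : ℝ :=
  if lnorm z ≤ t * ξ z then ξ z - lnorm z / t * Real.log (ξ z) + pathEntropy z / t else 0

/-- The spatial scaling function `r_t = (t / log t) ^ (α/(α-d))`. -/
def rScale (α : ℝ) (d : ℕ) (t : ℝ) : ℝ := (t / Real.log t) ^ (α / (α - d))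

/-- The scaling function `a_t = (t / log t) ^ (d/(α-d))`. -/
def aScale (α : ℝ) (d : ℕ) (t : ℝ) : ℝ := (t / Real.log t) ^ ((d : ℝ) / (α - d))

/-- The potential `ξ` is a family of i.i.d. Pareto(α) random variables:
they are measurable, independent, and `P {ξ(z) ≤ x} = 1 - x^(-α)` for `x ≥ 1`. -/
def IsParetoPotential {d : ℕ} {Ω : Type*} [MeasurableSpace Ω] (P : Measure Ω)
    (α : ℝ) (ξ : (Fin d → ℤ) → Ω → ℝ) : Prop :=
  (∀ z, Measurable (ξ z)) ∧
  iIndepFun ξ P ∧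
  (∀ z x, 1 ≤ x → P {ω | ξ z ω ≤ x} = ENNReal.ofReal (1 - x ^ (-α)))


def Wfun (q m : ℝ) (u : ℝ) : ℝ := u ^ (-q) * (-Real.log u) ^ (-m)

def Wfun' (q m : ℝ) (u : ℝ) : ℝ :=
  u ^ (-q-1) * (-Real.log u) ^ (-m-1) * (m - q * (-Real.log u))

lemma neg_log_pos {u : ℝ} (hu : 0 < u) (hu1 : u < 1) : 0 < -Real.log u := by
  have := Real.log_neg hu hu1; linarith

lemma wfun_deriv1 (q m : ℝ) {u : ℝ} (hu : 0 < u) (hu1 : u < 1) :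
    HasDerivAt (Wfun q m) (Wfun' q m u) u := by
  have hL : 0 < -Real.log u := neg_log_pos hu hu1
  have hlne : Real.log u ≠ 0 := by intro h; rw [h] at hL; simp at hL
  have h1 : HasDerivAt (fun u : ℝ => u ^ (-q)) (-q * u ^ (-q-1)) u := by
    simpa using Real.hasDerivAt_rpow_const (p := -q) (Or.inl (ne_of_gt hu))
  have hlog : HasDerivAt (fun u : ℝ => -Real.log u) (-u⁻¹) u :=
    (Real.hasDerivAt_log (ne_of_gt hu)).neg
  have houter : HasDerivAt (fun x : ℝ => x ^ (-m)) (-m * (-Real.log u) ^ (-m-1)) (-Real.log u) := by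
    simpa using Real.hasDerivAt_rpow_const (p := -m) (x := -Real.log u) (Or.inl (ne_of_gt hL))
  have h2 : HasDerivAt (fun u : ℝ => (-Real.log u) ^ (-m))
      ((-m * (-Real.log u) ^ (-m-1)) * (-u⁻¹)) u := by have := houter.comp u hlog; exact this
  have := h1.mul h2
  refine this.congr_deriv ?_
  symm
  have eA : u ^ (-q-1) = u ^ (-q) / u := by rw [Real.rpow_sub hu, Real.rpow_one]
  have eB : (-Real.log u) ^ (-m-1) = (-Real.log u) ^ (-m) / (-Real.log u) := by
    rw [Real.rpow_sub hL, Real.rpow_one]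
  rw [Wfun', eA, eB]
  field_simp
  ring

lemma wfun_deriv2 (q m : ℝ) {u : ℝ} (hu : 0 < u) (hu1 : u < 1) :
    HasDerivAt (Wfun' q m)
      (u ^ (-q-2) * (-Real.log u) ^ (-m-2) *
        ((m - q * (-Real.log u)) * (m + 1 - (q+1) * (-Real.log u)) + q * (-Real.log u))) u := by
  have hL : 0 < -Real.log u := neg_log_pos hu hu1
  have hlne : Real.log u ≠ 0 := by intro h; rw [h] at hL; simp at hL
  have h1 : HasDerivAt (fun u : ℝ => u ^ (-q-1)) ((-q-1) * u ^ (-q-1-1)) u := by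
    simpa using Real.hasDerivAt_rpow_const (p := -q-1) (Or.inl (ne_of_gt hu))
  have hlog : HasDerivAt (fun u : ℝ => -Real.log u) (-u⁻¹) u :=
    (Real.hasDerivAt_log (ne_of_gt hu)).neg
  have houter : HasDerivAt (fun x : ℝ => x ^ (-m-1)) ((-m-1) * (-Real.log u) ^ (-m-1-1)) (-Real.log u) := by
    simpa using Real.hasDerivAt_rpow_const (p := -m-1) (x := -Real.log u) (Or.inl (ne_of_gt hL))
  have h2 : HasDerivAt (fun u : ℝ => (-Real.log u) ^ (-m-1))
      (((-m-1) * (-Real.log u) ^ (-m-1-1)) * (-u⁻¹)) u := by have := houter.comp u hlog; exact this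
  have h3 : HasDerivAt (fun u : ℝ => m - q * (-Real.log u)) (-(q * (-u⁻¹))) u := by
    simpa using ((hlog.const_mul q).const_sub m)
  have := (h1.mul h2).mul h3
  refine this.congr_deriv ?_
  symm
  simp only [Pi.mul_apply]
  have eB : u ^ (-q-1-1) = u ^ (-q) / u / u := by
    rw [Real.rpow_sub hu, Real.rpow_sub hu, Real.rpow_one]
  have eC : u ^ (-q-2) = u ^ (-q) / u / u := by
    rw [show -q-2 = -q-1-1 by ring]; exact eB
  have eA : u ^ (-q-1) = u ^ (-q) / u := by rw [Real.rpow_sub hu, Real.rpow_one]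
  have fB : (-Real.log u) ^ (-m-1-1) = (-Real.log u) ^ (-m) / (-Real.log u) / (-Real.log u) := by
    rw [Real.rpow_sub hL, Real.rpow_sub hL, Real.rpow_one]
  have fC : (-Real.log u) ^ (-m-2) = (-Real.log u) ^ (-m) / (-Real.log u) / (-Real.log u) := by
    rw [show -m-2 = -m-1-1 by ring]; exact fB
  have fA : (-Real.log u) ^ (-m-1) = (-Real.log u) ^ (-m) / (-Real.log u) := by
    rw [Real.rpow_sub hL, Real.rpow_one]
  rw [eB, eC, eA, fB, fC, fA]
  field_simp
  ring

lemma wfun_convex (q m : ℝ) (hq : 0 < q) (hm : 0 < m) :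
    ConvexOn ℝ (Set.Ioo (0:ℝ) (Real.exp (-(m/q + 1)))) (Wfun q m) := by
  set u₀ : ℝ := Real.exp (-(m/q + 1)) with hu₀
  have hu₀1 : u₀ < 1 := by
    rw [hu₀]
    apply Real.exp_lt_one_iff.mpr
    have : 0 < m/q := div_pos hm hq
    linarith
  have hmem : ∀ x ∈ Set.Ioo (0:ℝ) u₀, 0 < x ∧ x < 1 := by
    rintro x ⟨h1, h2⟩; exact ⟨h1, lt_trans h2 hu₀1⟩
  have hopen : IsOpen (Set.Ioo (0:ℝ) u₀) := isOpen_Ioo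
  have hint : interior (Set.Ioo (0:ℝ) u₀) = Set.Ioo (0:ℝ) u₀ := hopen.interior_eq
  have hderiv : ∀ x ∈ Set.Ioo (0:ℝ) u₀, deriv (Wfun q m) x = Wfun' q m x := by
    intro x hx
    exact ((wfun_deriv1 q m (hmem x hx).1 (hmem x hx).2).deriv)
  apply convexOn_of_deriv2_nonneg (convex_Ioo _ _)
  · intro x hx
    exact ((wfun_deriv1 q m (hmem x hx).1 (hmem x hx).2).differentiableAt).continuousAt.continuousWithinAt
  · intro x hx
    rw [hint] at hx
    exact ((wfun_deriv1 q m (hmem x hx).1 (hmem x hx).2).differentiableAt).differentiableWithinAt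
  · intro x hx
    rw [hint] at hx
    have : HasDerivAt (deriv (Wfun q m)) _ x :=
      ((wfun_deriv2 q m (hmem x hx).1 (hmem x hx).2).congr_of_eventuallyEq
        (Filter.eventuallyEq_of_mem (hopen.mem_nhds hx) (fun y hy => (hderiv y hy).symm)).symm)
    exact this.differentiableAt.differentiableWithinAt
  · intro x hx
    rw [hint] at hx
    have hx0 := (hmem x hx).1
    have hx1 := (hmem x hx).2
    have hD2 : HasDerivAt (deriv (Wfun q m))
        (x ^ (-q-2) * (-Real.log x) ^ (-m-2) *
          ((m - q * (-Real.log x)) * (m + 1 - (q+1) * (-Real.log x)) + q * (-Real.log x))) x :=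
      ((wfun_deriv2 q m hx0 hx1).congr_of_eventuallyEq
        (Filter.eventuallyEq_of_mem (hopen.mem_nhds hx) (fun y hy => (hderiv y hy).symm)).symm)
    have hit : deriv^[2] (Wfun q m) x =
        x ^ (-q-2) * (-Real.log x) ^ (-m-2) *
          ((m - q * (-Real.log x)) * (m + 1 - (q+1) * (-Real.log x)) + q * (-Real.log x)) := by
      rw [show (2:ℕ) = 1 + 1 from rfl, Function.iterate_add_apply, Function.iterate_one]
      exact hD2.deriv
    rw [hit]
    have hL : 0 < -Real.log x := neg_log_pos hx0 hx1
    have hLlarge : m/q + 1 ≤ -Real.log x := by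
      have : Real.log x < Real.log u₀ := Real.log_lt_log hx0 hx.2
      rw [hu₀, Real.log_exp] at this
      linarith
    have h1 : m - q * (-Real.log x) ≤ 0 := by
      have : q * (m/q + 1) ≤ q * (-Real.log x) := by
        apply mul_le_mul_of_nonneg_left hLlarge (le_of_lt hq)
      have hqq : q * (m/q + 1) = m + q := by field_simp
      linarith
    have h2 : m + 1 - (q+1) * (-Real.log x) ≤ 0 := by
      have h3 : (1:ℝ) * (m/q+1) ≤ 1 * (-Real.log x) := by
        apply mul_le_mul_of_nonneg_left hLlarge (by norm_num)
      have : q * (m/q + 1) = m + q := by field_simp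
      nlinarith [div_pos hm hq]
    have hfac : 0 ≤ (m - q * (-Real.log x)) * (m + 1 - (q+1) * (-Real.log x)) + q * (-Real.log x) :=
      by nlinarith [mul_pos hq hL]
    have hp1 : (0:ℝ) < x ^ (-q-2) := Real.rpow_pos_of_pos hx0 _
    have hp2 : (0:ℝ) < (-Real.log x) ^ (-m-2) := Real.rpow_pos_of_pos hL _
    positivity

def Rfun (q m : ℝ) (t : ℝ) : ℝ := t ^ q * Real.log t ^ (-m)

lemma rfun_eq_wfun (q m : ℝ) {t : ℝ} (ht : 1 < t) : Rfun q m t = Wfun q m t⁻¹ := by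
  have ht0 : 0 < t := lt_trans one_pos ht
  rw [Rfun, Wfun, Real.log_inv]
  have e1 : (t⁻¹) ^ (-q) = t ^ q := by
    rw [Real.inv_rpow (le_of_lt ht0), Real.rpow_neg (le_of_lt ht0), inv_inv]
  rw [e1, neg_neg]

lemma rfun_pos (q m : ℝ) {t : ℝ} (ht : 1 < t) : 0 < Rfun q m t := by
  have h1 : (0:ℝ) < t := lt_trans one_pos ht
  have h2 : (0:ℝ) < Real.log t := Real.log_pos ht
  exact mul_pos (Real.rpow_pos_of_pos h1 _) (Real.rpow_pos_of_pos h2 _)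

lemma interp_aux (q m : ℝ) (hq : 0 < q) (hm : 0 < m) (A B t₁ t t₂ : ℝ)
    (hT : Real.exp (m/q + 1) < t₁) (h1 : t₁ ≤ t) (h2 : t ≤ t₂)
    (H1 : Rfun q m t₁ ≤ A + B / t₁) (H2 : Rfun q m t₂ ≤ A + B / t₂) :
    Rfun q m t ≤ A + B / t := by
  have hexp : (1:ℝ) < Real.exp (m/q + 1) := by
    calc (1:ℝ) = Real.exp 0 := (Real.exp_zero).symm
      _ < Real.exp (m/q + 1) := Real.exp_lt_exp.mpr (by positivity)
  have ht₁ : 1 < t₁ := lt_trans hexp hT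
  have ht : 1 < t := lt_of_lt_of_le ht₁ h1
  have ht₂ : 1 < t₂ := lt_of_lt_of_le ht h2
  have ht₁0 : (0:ℝ) < t₁ := lt_trans one_pos ht₁
  have ht0 : (0:ℝ) < t := lt_trans one_pos ht
  have ht₂0 : (0:ℝ) < t₂ := lt_trans one_pos ht₂
  set u₀ : ℝ := Real.exp (-(m/q + 1)) with hu₀def
  have hu₀inv : u₀ = (Real.exp (m/q + 1))⁻¹ := by rw [hu₀def, Real.exp_neg]
  have hmem : ∀ s : ℝ, t₁ ≤ s → s⁻¹ ∈ Set.Ioo (0:ℝ) u₀ := by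
    intro s hs
    have hs0 : (0:ℝ) < s := lt_of_lt_of_le ht₁0 hs
    constructor
    · positivity
    · rw [hu₀inv]
      apply inv_strictAnti₀ (Real.exp_pos _) (lt_of_lt_of_le hT hs)
  rcases eq_or_lt_of_le (le_trans h1 h2 : t₁ ≤ t₂) with heq | hlt
  · have : t = t₁ := le_antisymm (heq ▸ h2) h1
    rw [this]; exact H1
  · have hu21 : t₂⁻¹ < t₁⁻¹ := by
      apply inv_strictAnti₀ ht₁0 hlt
    set a : ℝ := (t⁻¹ - t₂⁻¹) / (t₁⁻¹ - t₂⁻¹) with ha_def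
    have hden : (0:ℝ) < t₁⁻¹ - t₂⁻¹ := by linarith
    have hua : t₂⁻¹ ≤ t⁻¹ := by
      apply inv_anti₀ ht0 h2
    have hub : t⁻¹ ≤ t₁⁻¹ := by
      apply inv_anti₀ ht₁0 h1
    have ha0 : 0 ≤ a := div_nonneg (by linarith) (le_of_lt hden)
    have hb0 : 0 ≤ 1 - a := by
      rw [ha_def]
      rw [sub_nonneg, div_le_one hden]
      linarith
    have hab : a * t₁⁻¹ + (1 - a) * t₂⁻¹ = t⁻¹ := by
      have hcan : a * (t₁⁻¹ - t₂⁻¹) = t⁻¹ - t₂⁻¹ := div_mul_cancel₀ _ hden.ne'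
      linear_combination hcan
    have hconv := (wfun_convex q m hq hm).2 (hmem t₁ le_rfl) (hmem t₂ (le_trans h1 h2))
      ha0 hb0 (by ring : a + (1 - a) = 1)
    rw [smul_eq_mul, smul_eq_mul, hab] at hconv
    rw [rfun_eq_wfun q m ht]
    rw [rfun_eq_wfun q m ht₁] at H1
    rw [rfun_eq_wfun q m ht₂] at H2
    calc Wfun q m t⁻¹ ≤ a * Wfun q m t₁⁻¹ + (1 - a) * Wfun q m t₂⁻¹ := hconv
      _ ≤ a * (A + B / t₁) + (1 - a) * (A + B / t₂) := by
          apply add_le_add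
          · exact mul_le_mul_of_nonneg_left H1 ha0
          · exact mul_le_mul_of_nonneg_left H2 hb0
      _ = A + B * (a * t₁⁻¹ + (1 - a) * t₂⁻¹) := by
          rw [div_eq_mul_inv, div_eq_mul_inv]; ring
      _ = A + B / t := by rw [hab, div_eq_mul_inv]

/-- encoding of a step coordinate -/
def enc3 : ℤ → Fin 3 := fun x => if x < 0 then 0 else if x = 0 then 1 else 2

lemma enc3_inj {x y : ℤ} (hx : x.natAbs ≤ 1) (hy : y.natAbs ≤ 1) (h : enc3 x = enc3 y) :
    x = y := by
  have hx' : x = -1 ∨ x = 0 ∨ x = 1 := by omega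
  have hy' : y = -1 ∨ y = 0 ∨ y = 1 := by omega
  rcases hx' with rfl | rfl | rfl <;> rcases hy' with rfl | rfl | rfl <;>
    simp_all [enc3] <;> omega

lemma numPaths_le (d : ℕ) (z : Fin d → ℤ) :
    numPaths d z ≤ 3 ^ (d * ∑ i, (z i).natAbs) := by
  set n := ∑ i, (z i).natAbs with hn
  set S : Set (Fin (n+1) → Fin d → ℤ) := {p |
    p 0 = 0 ∧ p (Fin.last _) = z ∧
    ∀ i : Fin n, (∑ j, ((p i.succ j) - (p i.castSucc j)).natAbs) = 1} with hS
  have key : Nat.card S ≤ Nat.card (Fin n → Fin d → Fin 3) := by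
    apply Nat.card_le_card_of_injective
      (f := fun p : S => fun (i : Fin n) (j : Fin d) => enc3 (p.1 i.succ j - p.1 i.castSucc j))
    intro p q h
    have hstep : ∀ (r : S) (i : Fin n) (j : Fin d),
        ((r.1 i.succ j - r.1 i.castSucc j)).natAbs ≤ 1 := by
      intro r i j
      have := r.2.2.2 i
      calc ((r.1 i.succ j - r.1 i.castSucc j)).natAbs
          ≤ ∑ j', ((r.1 i.succ j' - r.1 i.castSucc j')).natAbs :=
            Finset.single_le_sum (f := fun j' => ((r.1 i.succ j' - r.1 i.castSucc j')).natAbs)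
              (fun _ _ => Nat.zero_le _) (Finset.mem_univ j)
        _ = 1 := this
    have heq : ∀ i : Fin (n+1), p.1 i = q.1 i := by
      intro i
      induction i using Fin.induction with
      | zero => rw [p.2.1, q.2.1]
      | succ i ih =>
        funext j
        have h1 := congrFun (congrFun h i)
        have h2 := h1 j
        have := enc3_inj (hstep p i j) (hstep q i j) h2
        have hihj := congrFun ih j
        omega
    exact Subtype.ext (funext heq)
  have hcard : Nat.card (Fin n → Fin d → Fin 3) = 3 ^ (d * n) := by
    simp [Nat.card_eq_fintype_card, Fintype.card_fun, ← pow_mul, Nat.mul_comm]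
  have : numPaths d z = Nat.card S := by
    rw [numPaths, Nat.card_coe_set_eq]
  rw [this]
  rw [hcard] at key
  exact key

lemma lnorm_eq_cast {d : ℕ} (z : Fin d → ℤ) :
    lnorm z = ((∑ i, (z i).natAbs : ℕ) : ℝ) := by
  rw [lnorm]
  push_cast
  apply Finset.sum_congr rfl
  intro i _
  rw [Nat.cast_natAbs]
  push_cast
  rfl

lemma lnorm_nonneg {d : ℕ} (z : Fin d → ℤ) : 0 ≤ lnorm z :=
  Finset.sum_nonneg fun i _ => abs_nonneg _

lemma pathEntropy_nonneg {d : ℕ} (z : Fin d → ℤ) : 0 ≤ pathEntropy z := by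
  rw [pathEntropy]
  rcases Nat.eq_zero_or_pos (numPaths d z) with h | h
  · simp [h]
  · apply Real.log_nonneg
    exact_mod_cast h

lemma pathEntropy_le {d : ℕ} (z : Fin d → ℤ) :
    pathEntropy z ≤ (d * Real.log 3) * lnorm z := by
  rw [pathEntropy, lnorm_eq_cast]
  set n := ∑ i, (z i).natAbs with hn
  have h3 : (0:ℝ) ≤ Real.log 3 := Real.log_nonneg (by norm_num)
  rcases Nat.eq_zero_or_pos (numPaths d z) with h | h
  · rw [h]
    simp only [Nat.cast_zero, Real.log_zero]
    positivity
  · calc Real.log (numPaths d z) ≤ Real.log ((3:ℝ) ^ (d * n)) := by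
          apply Real.log_le_log (by exact_mod_cast h)
          exact_mod_cast numPaths_le d z
      _ = (d * Real.log 3) * n := by
          rw [Real.log_pow]; push_cast; ring

lemma pareto_ae (d : ℕ) (hd : 1 ≤ d) (α : ℝ) (hα : 0 < α)
    {Ω : Type*} [MeasurableSpace Ω] (P : Measure Ω) [IsProbabilityMeasure P]
    (ξ : (Fin d → ℤ) → Ω → ℝ) (hξ : IsParetoPotential P α ξ) (C : ℝ) (hC : 1 ≤ C) :
    ∀ᵐ ω ∂P, (∀ z, 1 < ξ z ω) ∧
      (∃ z₁ z₂ : Fin d → ℤ, z₁ ≠ z₂ ∧ C < ξ z₁ ω ∧ C < ξ z₂ ω) := by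
  obtain ⟨hmeas, hindep, hcdf⟩ := hξ
  -- the enumeration of sites
  set v : ℕ → (Fin d → ℤ) := fun n => fun _ => (n : ℤ) with hv
  have hvinj : Function.Injective v := by
    intro n m h
    have h2 : (n:ℤ) = (m:ℤ) := congrFun h ⟨0, hd⟩
    exact_mod_cast h2
  -- part 1 : each ξ z > 1 a.s.
  have h1 : ∀ z : Fin d → ℤ, P {ω | ξ z ω ≤ 1} = 0 := by
    intro z
    rw [hcdf z 1 le_rfl]
    simp [Real.one_rpow]
  -- the one-point cdf at C
  set r : ENNReal := ENNReal.ofReal (1 - C ^ (-α)) with hr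
  have hrlt : r < 1 := by
    rw [hr]
    apply ENNReal.ofReal_lt_one.mpr
    have : (0:ℝ) < C ^ (-α) := Real.rpow_pos_of_pos (lt_of_lt_of_le one_pos hC) _
    linarith
  -- the "at most one exceedance" events
  set A : (Fin d → ℤ) → Set Ω := fun k => ⋂ z ∈ ({k}ᶜ : Set (Fin d → ℤ)), {ω | ξ z ω ≤ C}
    with hA
  have hAnull : ∀ k, P (A k) = 0 := by
    intro k
    have hbound : ∀ N : ℕ, P (A k) ≤ r ^ N := by
      intro N
      set s : Finset (Fin d → ℤ) := (Finset.image v (Finset.range (N+1))).erase k with hs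
      have hcard : N ≤ s.card := by
        rw [hs]
        have h1' : (Finset.image v (Finset.range (N+1))).card = N + 1 := by
          rw [Finset.card_image_of_injective _ hvinj, Finset.card_range]
        have h2' := Finset.pred_card_le_card_erase (a := k) (s := Finset.image v (Finset.range (N+1)))
        omega
      have hsub : A k ⊆ ⋂ z ∈ s, {ω | ξ z ω ≤ C} := by
        intro ω hω
        rw [Set.mem_iInter₂]
        intro z hz
        have hzk : z ≠ k := Finset.ne_of_mem_erase hz
        exact Set.mem_iInter₂.mp hω z hzk
      have hprod : P (⋂ z ∈ s, {ω | ξ z ω ≤ C}) = ∏ z ∈ s, P {ω | ξ z ω ≤ C} := by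
        apply hindep.meas_biInter
        intro z _
        exact ⟨Set.Iic C, measurableSet_Iic, rfl⟩
      calc P (A k) ≤ P (⋂ z ∈ s, {ω | ξ z ω ≤ C}) := measure_mono hsub
        _ = ∏ z ∈ s, P {ω | ξ z ω ≤ C} := hprod
        _ = r ^ s.card := by
            rw [Finset.prod_congr rfl (fun z _ => hcdf z C hC), Finset.prod_const]
        _ ≤ r ^ N := pow_le_pow_right_of_le_one' (le_of_lt hrlt) hcard
    have htend : Tendsto (fun N : ℕ => r ^ N) atTop (nhds 0) :=
      ENNReal.tendsto_pow_atTop_nhds_zero_of_lt_one hrlt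
    have : P (A k) ≤ 0 := le_of_tendsto_of_tendsto' tendsto_const_nhds htend hbound
    exact le_antisymm this zero_le
  -- assemble
  have hnull : P ((⋃ z, {ω | ξ z ω ≤ 1}) ∪ ⋃ k, A k) = 0 := by
    apply measure_union_null
    · exact measure_iUnion_null h1
    · exact measure_iUnion_null hAnull
  rw [ae_iff]
  apply measure_mono_null _ hnull
  intro ω hω
  simp only [Set.mem_setOf_eq, not_and_or] at hω
  rcases hω with hω | hω
  · left
    push_neg at hω
    obtain ⟨z, hz⟩ := hω
    exact Set.mem_iUnion.mpr ⟨z, by simpa using hz⟩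
  · right
    push_neg at hω
    -- at most one site exceeds C
    by_cases hex : ∃ k, C < ξ k ω
    · obtain ⟨k, hk⟩ := hex
      apply Set.mem_iUnion.mpr ⟨k, ?_⟩
      rw [hA]
      rw [Set.mem_iInter₂]
      intro z hz
      by_contra hcon
      simp only [Set.mem_setOf_eq, not_le] at hcon
      exact absurd hk (not_lt.mpr (hω z k hz hcon))
    · push_neg at hex
      apply Set.mem_iUnion.mpr ⟨v 0, ?_⟩
      rw [hA, Set.mem_iInter₂]
      intro z _
      exact hex z

-- ==== auxiliary small lemmas ====

lemma KLMS.affine_min {A B t₁ t t₂ : ℝ} (h0 : 0 < t₁) (h1 : t₁ ≤ t) (h2 : t ≤ t₂) :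
    min (A + B / t₁) (A + B / t₂) ≤ A + B / t := by
  have ht0 : 0 < t := lt_of_lt_of_le h0 h1
  have ht₂0 : 0 < t₂ := lt_of_lt_of_le ht0 h2
  rcases le_total 0 B with hB | hB
  · refine le_trans (min_le_right _ _) ?_
    have : B / t₂ ≤ B / t := by
      rw [div_eq_mul_inv, div_eq_mul_inv]
      exact mul_le_mul_of_nonneg_left (by exact inv_anti₀ ht0 h2) hB
    linarith
  · refine le_trans (min_le_left _ _) ?_
    have : B / t₁ ≤ B / t := by
      rw [div_eq_mul_inv, div_eq_mul_inv]
      have hinv : t⁻¹ ≤ t₁⁻¹ := inv_anti₀ h0 h1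
      exact mul_le_mul_of_nonpos_left hinv hB
    linarith

lemma KLMS.affine_neg {A B u₂ u u' : ℝ} (h1 : u₂ ≤ u) (h2 : u ≤ u')
    (h3 : A + B * u ≤ 0) (h4 : 0 < A + B * u₂) : A + B * u' ≤ 0 := by
  have hB : B ≤ 0 := by
    by_contra hB'
    push_neg at hB'
    nlinarith
  nlinarith [mul_le_mul_of_nonpos_left h2 hB]

lemma KLMS.xbound {x cc : ℝ} (hx : 0 < x) : x * (1 + cc - Real.log x) ≤ Real.exp cc := by
  have h := Real.add_one_le_exp (cc - Real.log x)
  have h2 : Real.exp (cc - Real.log x) = Real.exp cc / x := by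
    rw [Real.exp_sub, Real.exp_log hx]
  rw [h2] at h
  have h3 : x * (cc - Real.log x + 1) ≤ x * (Real.exp cc / x) :=
    mul_le_mul_of_nonneg_left h hx.le
  rw [mul_div_cancel₀ _ (ne_of_gt hx)] at h3
  linarith [h3]

lemma scale_eq {α : ℝ} {d : ℕ} {β : ℝ} (hα : (d:ℝ) < α) {s : ℝ} (hs : 1 < s) :
    aScale α d s * Real.log s ^ (-β)
      = Rfun ((d:ℝ)/(α-(d:ℝ))) ((d:ℝ)/(α-(d:ℝ)) + β) s := by
  have hs0 : (0:ℝ) < s := lt_trans one_pos hs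
  have hls : (0:ℝ) < Real.log s := Real.log_pos hs
  set qq : ℝ := (d:ℝ)/(α-(d:ℝ)) with hqq
  rw [aScale, Rfun, ← hqq]
  rw [Real.div_rpow hs0.le hls.le]
  rw [show -(qq + β) = -qq + -β by ring, Real.rpow_add hls]
  rw [Real.rpow_neg hls.le qq, div_eq_mul_inv]
  ring

section DET
variable {d : ℕ}

lemma KLMS.Phi_active (Ξ : (Fin d → ℤ) → ℝ) {t : ℝ} (ht : 0 < t) {z : Fin d → ℤ}
    (ha : lnorm z ≤ t * Ξ z) :
    Phi Ξ t z = Ξ z + (pathEntropy z - lnorm z * Real.log (Ξ z)) / t := by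
  rw [Phi, if_pos ha]
  field_simp
  ring

lemma KLMS.Phi_inactive (Ξ : (Fin d → ℤ) → ℝ) {t : ℝ} {z : Fin d → ℤ}
    (ha : ¬ (lnorm z ≤ t * Ξ z)) : Phi Ξ t z = 0 := by
  rw [Phi, if_neg ha]

set_option maxHeartbeats 1000000 in
lemma KLMS.main_det (d : ℕ) (hd : 1 ≤ d) (α β : ℝ) (hα : (d:ℝ) < α) (hβ : 1 + 1/(α-d) < β)
    (Ξ : (Fin d → ℤ) → ℝ) (hξ1 : ∀ z, 1 < Ξ z)
    (v₁ v₂ : Fin d → ℤ) (hv12 : v₁ ≠ v₂)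
    (hv1 : Real.exp (1 + (d:ℝ) * Real.log 3) * (1 + (d:ℝ) * Real.log 3) + 2 < Ξ v₁)
    (hv2 : Real.exp (1 + (d:ℝ) * Real.log 3) * (1 + (d:ℝ) * Real.log 3) + 2 < Ξ v₂)
    (Z1 Z2 : ℝ → (Fin d → ℤ))
    (H : ∀ t : ℝ, 1 < t →
        (∀ z, Phi Ξ t z ≤ Phi Ξ t (Z1 t)) ∧
        (∀ z, Phi Ξ t z = Phi Ξ t (Z1 t) → lnorm z ≤ lnorm (Z1 t)) ∧
        Z2 t ≠ Z1 t ∧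
        (∀ z, z ≠ Z1 t → Phi Ξ t z ≤ Phi Ξ t (Z2 t)) ∧
        (∀ z, z ≠ Z1 t → Phi Ξ t z = Phi Ξ t (Z2 t) → lnorm z ≤ lnorm (Z2 t))) :
    ∃ t₀ : ℝ, 1 < t₀ ∧ ∀ t₁ t₂ : ℝ, t₀ ≤ t₁ → t₁ ≤ t₂ → Z1 t₁ = Z1 t₂ →
      (1/2) * aScale α d t₁ * Real.log t₁ ^ (-β) ≤ Phi Ξ t₁ (Z1 t₁) - Phi Ξ t₁ (Z2 t₁) →
      (1/2) * aScale α d t₂ * Real.log t₂ ^ (-β) ≤ Phi Ξ t₂ (Z1 t₂) - Phi Ξ t₂ (Z2 t₂) →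
      ∀ t ∈ Set.Icc t₁ t₂,
        (1/2) * aScale α d t * Real.log t ^ (-β) ≤ Phi Ξ t (Z1 t) - Phi Ξ t (Z2 t) := by
  have hd0 : (0:ℝ) < d := by exact_mod_cast hd
  have hαd : (0:ℝ) < α - d := by linarith
  have hβ0 : 0 < β := by
    have h' : 0 < 1/(α-d) := by positivity
    linarith
  set q : ℝ := (d:ℝ) / (α - d) with hqdef
  have hq : 0 < q := div_pos hd0 hαd
  set M : ℝ := q + β with hMdef
  have hM : 0 < M := by linarith
  set c : ℝ := (d:ℝ) * Real.log 3 with hcdef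
  have hc0 : 0 ≤ c := mul_nonneg hd0.le (Real.log_nonneg (by norm_num))
  set K : ℝ := Real.exp (1 + c) * (1 + c) with hKdef
  have hexp1 : 1 ≤ Real.exp (1 + c) := Real.one_le_exp (by linarith)
  have hK1 : 1 ≤ K := by
    have h' := mul_le_mul hexp1 (by linarith : (1:ℝ) ≤ 1 + c) (by norm_num) (by positivity)
    rw [hKdef]
    linarith only [h']
  have hξpos : ∀ z, 0 < Ξ z := fun z => lt_trans one_pos (hξ1 z)
  set B : (Fin d → ℤ) → ℝ := fun z' => pathEntropy z' - lnorm z' * Real.log (Ξ z') with hBdef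
  have hactmono : ∀ (z' : Fin d → ℤ) (s s' : ℝ), lnorm z' ≤ s * Ξ z' → s ≤ s' →
      lnorm z' ≤ s' * Ξ z' := by
    intro z' s s' h hss
    exact le_trans h (mul_le_mul_of_nonneg_right hss (hξpos z').le)
  have hηle : ∀ z' : Fin d → ℤ, pathEntropy z' ≤ c * lnorm z' := by
    intro z'
    rw [hcdef]
    exact pathEntropy_le z'
  set T : ℝ := Real.exp (M/q + 1) with hTdef
  set t₀ : ℝ := max (T + 1) (max (lnorm v₁ * (1 + Real.log (Ξ v₁)) + 2)
    (lnorm v₂ * (1 + Real.log (Ξ v₂)) + 2)) with ht₀def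
  have hTpos : 0 < T := Real.exp_pos _
  have ht₀T : T + 1 ≤ t₀ := le_max_left _ _
  have ht₀1 : 1 < t₀ := by linarith
  have hsz1 : lnorm v₁ * (1 + Real.log (Ξ v₁)) + 2 ≤ t₀ :=
    le_trans (le_max_left _ _) (le_max_right _ _)
  have hsz2 : lnorm v₂ * (1 + Real.log (Ξ v₂)) + 2 ≤ t₀ :=
    le_trans (le_max_right _ _) (le_max_right _ _)
  refine ⟨t₀, ht₀1, ?_⟩
  -- lower bound for Φ at the two high sites
  have hΦv : ∀ v : Fin d → ℤ, K + 2 < Ξ v → lnorm v * (1 + Real.log (Ξ v)) + 2 ≤ t₀ →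
      ∀ s, t₀ ≤ s → K + 1 ≤ Phi Ξ s v := by
    intro v hKv hsize s hs
    have hs1 : 1 < s := lt_of_lt_of_le ht₀1 hs
    have hs0 : 0 < s := lt_trans one_pos hs1
    have hlog0 : 0 ≤ Real.log (Ξ v) := Real.log_nonneg (hξ1 v).le
    have hl0 : 0 ≤ lnorm v := lnorm_nonneg v
    have h1' : lnorm v ≤ lnorm v * (1 + Real.log (Ξ v)) :=
      le_mul_of_one_le_right hl0 (by linarith)
    have h1 : lnorm v ≤ s := by linarith
    have hact : lnorm v ≤ s * Ξ v :=
      le_trans h1 (le_mul_of_one_le_right hs0.le (hξ1 v).le)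
    have h2' : lnorm v * Real.log (Ξ v) ≤ lnorm v * (1 + Real.log (Ξ v)) :=
      mul_le_mul_of_nonneg_left (by linarith) hl0
    have h2 : lnorm v * Real.log (Ξ v) ≤ s := by linarith
    rw [Phi, if_pos hact]
    have hη := pathEntropy_nonneg v
    have h3 : lnorm v / s * Real.log (Ξ v) ≤ 1 := by
      rw [div_mul_eq_mul_div, div_le_one hs0]; exact h2
    have hps : 0 ≤ pathEntropy v / s := div_nonneg hη hs0.le
    linarith
  -- lower bound for the second maximum
  have hsecmax : ∀ s, t₀ ≤ s → K + 1 ≤ Phi Ξ s (Z2 s) := by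
    intro s hs
    have hs1 : 1 < s := lt_of_lt_of_le ht₀1 hs
    obtain ⟨-, -, -, hsec, -⟩ := H s hs1
    by_cases h : v₁ = Z1 s
    · have h2 : v₂ ≠ Z1 s := fun hh => hv12 (h.trans hh.symm)
      exact le_trans (hΦv v₂ hv2 hsz2 s hs) (hsec v₂ h2)
    · exact le_trans (hΦv v₁ hv1 hsz1 s hs) (hsec v₁ h)
  intro t₁ t₂ h01 h12 hZeq hG1 hG2 t htmem
  obtain ⟨htl, htr⟩ := htmem
  have h1t₁ : 1 < t₁ := lt_of_lt_of_le ht₀1 h01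
  have h1t : 1 < t := lt_of_lt_of_le h1t₁ htl
  have h1t₂ : 1 < t₂ := lt_of_lt_of_le h1t htr
  have ht₁p : (0:ℝ) < t₁ := lt_trans one_pos h1t₁
  have htp : (0:ℝ) < t := lt_trans one_pos h1t
  have ht₂p : (0:ℝ) < t₂ := lt_trans one_pos h1t₂
  have hTt₁ : Real.exp (M/q + 1) < t₁ := by rw [← hTdef]; linarith
  -- rescale the gap statements
  have hsc : ∀ s : ℝ, 1 < s →
      (1/2) * aScale α d s * Real.log s ^ (-β) = (1/2) * Rfun q M s := by
    intro s hs
    rw [mul_assoc, scale_eq hα hs, hqdef, hMdef, hqdef]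
  rw [hsc t₁ h1t₁] at hG1
  rw [hsc t₂ h1t₂] at hG2
  rw [hsc t h1t]
  have hR1 : 0 < Rfun q M t₁ := rfun_pos q M h1t₁
  have hR2 : 0 < Rfun q M t₂ := rfun_pos q M h1t₂
  set z : Fin d → ℤ := Z1 t₁ with hzdef
  have hz2 : Z1 t₂ = z := hZeq.symm
  rw [hz2] at hG2
  have hL1 : K + 1 ≤ Phi Ξ t₁ (Z2 t₁) := hsecmax t₁ h01
  have hL2 : K + 1 ≤ Phi Ξ t₂ (Z2 t₂) := hsecmax t₂ (by linarith)
  have hLt : K + 1 ≤ Phi Ξ t (Z2 t) := hsecmax t (by linarith)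
  have hΦz1 : (1/2) * Rfun q M t₁ + (K+1) ≤ Phi Ξ t₁ z := by linarith
  have hΦz2 : (1/2) * Rfun q M t₂ + (K+1) ≤ Phi Ξ t₂ z := by linarith
  -- z is active on the whole interval
  have hzact1 : lnorm z ≤ t₁ * Ξ z := by
    by_contra hcon
    rw [KLMS.Phi_inactive Ξ hcon] at hΦz1
    linarith only [hΦz1, hR1, hK1]
  have hzact : ∀ s, t₁ ≤ s → lnorm z ≤ s * Ξ z := fun s hs => hactmono z t₁ s hzact1 hs
  have hzeq : ∀ s, t₁ ≤ s → Phi Ξ s z = Ξ z + B z / s := fun s hs =>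
    KLMS.Phi_active Ξ (by linarith) (hzact s hs)
  -- lower bound for ψ_z on the interval
  have hψz : ∀ s, t₁ ≤ s → s ≤ t₂ → K + 1 ≤ Ξ z + B z / s := by
    intro s hs1 hs2
    have hmin := KLMS.affine_min (A := Ξ z) (B := B z) ht₁p hs1 hs2
    have e1 : Ξ z + B z / t₁ = Phi Ξ t₁ z := (hzeq t₁ le_rfl).symm
    have e2 : Ξ z + B z / t₂ = Phi Ξ t₂ z := (hzeq t₂ (by linarith)).symm
    rw [e1, e2] at hmin
    have hm : K + 1 ≤ min (Phi Ξ t₁ z) (Phi Ξ t₂ z) :=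
      le_min (by linarith) (by linarith)
    linarith
  -- the leader does not change inside the interval
  have hZ1t : Z1 t = z := by
    by_contra hy
    obtain ⟨hmax, -, -, -, -⟩ := H t h1t
    have hΦzy : Phi Ξ t z ≤ Phi Ξ t (Z1 t) := hmax z
    have hΦzt : Phi Ξ t z = Ξ z + B z / t := hzeq t htl
    have hKz : K + 1 ≤ Phi Ξ t z := by rw [hΦzt]; exact hψz t htl htr
    have hypos : 0 < Phi Ξ t (Z1 t) := by linarith
    have hyact : lnorm (Z1 t) ≤ t * Ξ (Z1 t) := by
      by_contra hcon; rw [KLMS.Phi_inactive Ξ hcon] at hypos; linarith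
    have hyact2 : lnorm (Z1 t) ≤ t₂ * Ξ (Z1 t) := hactmono _ t t₂ hyact htr
    obtain ⟨-, -, -, hsec2, -⟩ := H t₂ h1t₂
    rw [hz2] at hsec2
    have hyz2 : Z1 t ≠ z := hy
    have hgap2 : (1/2) * Rfun q M t₂ ≤ Phi Ξ t₂ z - Phi Ξ t₂ (Z1 t) := by
      have := hsec2 (Z1 t) hyz2
      linarith
    have hΦyt₂ : Phi Ξ t₂ (Z1 t) = Ξ (Z1 t) + B (Z1 t) / t₂ :=
      KLMS.Phi_active Ξ (by linarith) hyact2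
    have hΦyt : Phi Ξ t (Z1 t) = Ξ (Z1 t) + B (Z1 t) / t :=
      KLMS.Phi_active Ξ (by linarith) hyact
    by_cases hyt₁ : lnorm (Z1 t) ≤ t₁ * Ξ (Z1 t)
    · -- y active from t₁ on : affine min contradiction
      have hΦyt₁ : Phi Ξ t₁ (Z1 t) = Ξ (Z1 t) + B (Z1 t) / t₁ :=
        KLMS.Phi_active Ξ (by linarith) hyt₁
      obtain ⟨-, -, -, hsec1, -⟩ := H t₁ h1t₁
      rw [← hzdef] at hsec1
      have hgap1 : (1/2) * Rfun q M t₁ ≤ Phi Ξ t₁ z - Phi Ξ t₁ (Z1 t) := by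
        have := hsec1 (Z1 t) hyz2
        linarith
      have hmin := KLMS.affine_min (A := Ξ z - Ξ (Z1 t)) (B := B z - B (Z1 t)) ht₁p htl htr
      have ee : ∀ s : ℝ, (Ξ z - Ξ (Z1 t)) + (B z - B (Z1 t)) / s
          = (Ξ z + B z / s) - (Ξ (Z1 t) + B (Z1 t) / s) := by
        intro s; rw [sub_div]; ring
      rw [ee t₁, ee t₂, ee t] at hmin
      rw [← hzeq t₁ le_rfl, ← hΦyt₁, ← hzeq t₂ (by linarith), ← hΦyt₂, ← hΦzt, ← hΦyt] at hmin
      have hminpos : 0 < min (Phi Ξ t₁ z - Phi Ξ t₁ (Z1 t)) (Phi Ξ t₂ z - Phi Ξ t₂ (Z1 t)) :=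
        lt_min (by linarith) (by linarith)
      linarith
    · -- y activates inside the interval
      have hξy := hξpos (Z1 t)
      have hyl : t₁ * Ξ (Z1 t) < lnorm (Z1 t) := lt_of_not_ge hyt₁
      have hlpos : 0 < lnorm (Z1 t) := lt_trans (by positivity) hyl
      set ts : ℝ := lnorm (Z1 t) / Ξ (Z1 t) with htsdef
      have hts0 : 0 < ts := div_pos hlpos hξy
      have ht1ts : t₁ < ts := by rw [htsdef, lt_div_iff₀ hξy]; linarith
      have htst : ts ≤ t := by rw [htsdef, div_le_iff₀ hξy]; linarith
      have hlny : lnorm (Z1 t) = ts * Ξ (Z1 t) := by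
        rw [htsdef]; field_simp
      rcases eq_or_lt_of_le htr with heq | htlt
      · -- t = t₂ : direct contradiction
        have h2 : Phi Ξ t₂ z ≤ Phi Ξ t₂ (Z1 t) := by rw [← heq]; exact hmax z
        linarith
      · -- use the affine lemma on [ts, t₂]
        have haff := KLMS.affine_neg (A := Ξ z - Ξ (Z1 t)) (B := B z - B (Z1 t))
          (u₂ := 1/t₂) (u := 1/t) (u' := 1/ts)
          (by apply one_div_le_one_div_of_le htp htr)
          (by apply one_div_le_one_div_of_le hts0 htst)
          (by
            have ee : (Ξ z - Ξ (Z1 t)) + (B z - B (Z1 t)) * (1/t)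
                = (Ξ z + B z / t) - (Ξ (Z1 t) + B (Z1 t) / t) := by
              rw [mul_one_div, sub_div]; ring
            rw [ee, ← hΦzt, ← hΦyt]; linarith)
          (by
            have ee : (Ξ z - Ξ (Z1 t)) + (B z - B (Z1 t)) * (1/t₂)
                = (Ξ z + B z / t₂) - (Ξ (Z1 t) + B (Z1 t) / t₂) := by
              rw [mul_one_div, sub_div]; ring
            rw [ee, ← hzeq t₂ (by linarith), ← hΦyt₂]; linarith)
        have ee : (Ξ z - Ξ (Z1 t)) + (B z - B (Z1 t)) * (1/ts)
            = (Ξ z + B z / ts) - (Ξ (Z1 t) + B (Z1 t) / ts) := by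
          rw [mul_one_div, sub_div]; ring
        rw [ee] at haff
        have hlbz : K + 1 ≤ Ξ z + B z / ts := hψz ts (le_of_lt ht1ts) (by linarith)
        -- upper bound for ψ_y at the activation time
        have hηy := hηle (Z1 t)
        have hup : Ξ (Z1 t) + B (Z1 t) / ts ≤ Real.exp c := by
          have hBps : B (Z1 t) / ts ≤ c * Ξ (Z1 t) - Ξ (Z1 t) * Real.log (Ξ (Z1 t)) := by
            rw [hBdef]
            simp only
            rw [div_le_iff₀ hts0, hlny]
            rw [hlny] at hηy
            nlinarith only [hηy]
          have hxb := KLMS.xbound (cc := c) hξy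
          nlinarith only [hBps, hxb]
        have hKc : Real.exp c ≤ K := by
          rw [hKdef]
          have h1 : Real.exp c ≤ Real.exp (1 + c) := Real.exp_le_exp.mpr (by linarith only [hc0])
          nlinarith only [h1, hc0, Real.exp_pos (1+c)]
        linarith
  -- main comparison with w = Z2 t
  obtain ⟨-, -, hne, -, -⟩ := H t h1t
  rw [hZ1t] at hne ⊢
  have hwz : Z2 t ≠ z := hne
  have hwact : lnorm (Z2 t) ≤ t * Ξ (Z2 t) := by
    by_contra hcon
    rw [KLMS.Phi_inactive Ξ hcon] at hLt
    linarith
  have hwact2 : lnorm (Z2 t) ≤ t₂ * Ξ (Z2 t) := hactmono _ t t₂ hwact htr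
  have hΦwt : Phi Ξ t (Z2 t) = Ξ (Z2 t) + B (Z2 t) / t :=
    KLMS.Phi_active Ξ (by linarith) hwact
  have hΦwt₂ : Phi Ξ t₂ (Z2 t) = Ξ (Z2 t) + B (Z2 t) / t₂ :=
    KLMS.Phi_active Ξ (by linarith) hwact2
  obtain ⟨-, -, -, hsec1, -⟩ := H t₁ h1t₁
  rw [← hzdef] at hsec1
  obtain ⟨-, -, -, hsec2, -⟩ := H t₂ h1t₂
  rw [hz2] at hsec2
  have hgap1w : (1/2) * Rfun q M t₁ ≤ Phi Ξ t₁ z - Phi Ξ t₁ (Z2 t) := by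
    have := hsec1 (Z2 t) hwz
    linarith
  have hgap2w : (1/2) * Rfun q M t₂ ≤ Phi Ξ t₂ z - Phi Ξ t₂ (Z2 t) := by
    have := hsec2 (Z2 t) hwz
    linarith
  have hΦzt : Phi Ξ t z = Ξ z + B z / t := hzeq t htl
  by_cases hw1 : lnorm (Z2 t) ≤ t₁ * Ξ (Z2 t)
  · -- w active on the whole interval : convex interpolation
    have hΦwt₁ : Phi Ξ t₁ (Z2 t) = Ξ (Z2 t) + B (Z2 t) / t₁ :=
      KLMS.Phi_active Ξ (by linarith) hw1
    have hint := interp_aux q M hq hM (2*(Ξ z - Ξ (Z2 t))) (2*(B z - B (Z2 t))) t₁ t t₂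
      hTt₁ htl htr
      (by
        rw [mul_div_assoc]
        have ee : Phi Ξ t₁ z - Phi Ξ t₁ (Z2 t) = (Ξ z - Ξ (Z2 t)) + (B z - B (Z2 t)) / t₁ := by
          rw [hzeq t₁ le_rfl, hΦwt₁, sub_div]; ring
        rw [ee] at hgap1w
        linarith)
      (by
        rw [mul_div_assoc]
        have ee : Phi Ξ t₂ z - Phi Ξ t₂ (Z2 t) = (Ξ z - Ξ (Z2 t)) + (B z - B (Z2 t)) / t₂ := by
          rw [hzeq t₂ (by linarith), hΦwt₂, sub_div]; ring
        rw [ee] at hgap2w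
        linarith)
    rw [mul_div_assoc] at hint
    have ee : Phi Ξ t z - Phi Ξ t (Z2 t) = (Ξ z - Ξ (Z2 t)) + (B z - B (Z2 t)) / t := by
      rw [hΦzt, hΦwt, sub_div]; ring
    rw [ee]
    linarith
  · by_cases hwpos : 0 < Ξ (Z2 t) + B (Z2 t) / t₁
    · -- impossible : w would have small potential, contradicting Φ_t(w) ≥ K+1
      exfalso
      have hlw : t₁ * Ξ (Z2 t) < lnorm (Z2 t) := lt_of_not_ge hw1
      have hlwpos : 0 < lnorm (Z2 t) := lt_trans (mul_pos ht₁p (hξpos (Z2 t))) hlw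
      have hηw := hηle (Z2 t)
      have hBineq : lnorm (Z2 t) * Real.log (Ξ (Z2 t)) - pathEntropy (Z2 t) < t₁ * Ξ (Z2 t) := by
        have h' : 0 < t₁ * (Ξ (Z2 t) + B (Z2 t) / t₁) := mul_pos ht₁p hwpos
        rw [mul_add, mul_div_cancel₀ _ (ne_of_gt ht₁p)] at h'
        rw [hBdef] at h'
        simp only at h'
        linarith
      have hlog : Real.log (Ξ (Z2 t)) < 1 + c := by
        have hmul : lnorm (Z2 t) * Real.log (Ξ (Z2 t)) < lnorm (Z2 t) * (1 + c) := by
          nlinarith only [hBineq, hηw, hlw]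
        exact lt_of_mul_lt_mul_left (by linarith [hmul]) hlwpos.le
      have hξwlt : Ξ (Z2 t) < Real.exp (1 + c) := by
        have h' := Real.exp_lt_exp.mpr hlog
        rwa [Real.exp_log (hξpos (Z2 t))] at h'
      have hlogw0 : 0 ≤ Real.log (Ξ (Z2 t)) := Real.log_nonneg (hξ1 (Z2 t)).le
      have hub : Phi Ξ t (Z2 t) ≤ K := by
        rw [hΦwt]
        have e1 : B (Z2 t) / t ≤ c * Ξ (Z2 t) := by
          rw [hBdef]
          simp only
          rw [div_le_iff₀ htp]
          nlinarith only [hηw, mul_nonneg (lnorm_nonneg (Z2 t)) hlogw0,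
            mul_nonneg hc0 (sub_nonneg.mpr hwact)]
        rw [hKdef]
        nlinarith only [e1, hξwlt, hc0, hξpos (Z2 t)]
      linarith
    · -- w inactive at t₁ with nonpositive analytic value : interpolation still works
      push_neg at hwpos
      have hΦw10 : Phi Ξ t₁ (Z2 t) = 0 := KLMS.Phi_inactive Ξ hw1
      have hint := interp_aux q M hq hM (2*(Ξ z - Ξ (Z2 t))) (2*(B z - B (Z2 t))) t₁ t t₂
        hTt₁ htl htr
        (by
          rw [mul_div_assoc]
          have ee : (Ξ z - Ξ (Z2 t)) + (B z - B (Z2 t)) / t₁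
              = (Ξ z + B z / t₁) - (Ξ (Z2 t) + B (Z2 t) / t₁) := by
            rw [sub_div]; ring
          have h1 : (1/2) * Rfun q M t₁ ≤ (Ξ z + B z / t₁) - (Ξ (Z2 t) + B (Z2 t) / t₁) := by
            have hz1 : Phi Ξ t₁ z = Ξ z + B z / t₁ := hzeq t₁ le_rfl
            rw [hΦw10] at hgap1w
            linarith
          rw [← ee] at h1
          linarith)
        (by
          rw [mul_div_assoc]
          have ee : Phi Ξ t₂ z - Phi Ξ t₂ (Z2 t) = (Ξ z - Ξ (Z2 t)) + (B z - B (Z2 t)) / t₂ := by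
            rw [hzeq t₂ (by linarith), hΦwt₂, sub_div]; ring
          rw [ee] at hgap2w
          linarith)
      rw [mul_div_assoc] at hint
      have ee : Phi Ξ t z - Phi Ξ t (Z2 t) = (Ξ z - Ξ (Z2 t)) + (B z - B (Z2 t)) / t := by
        rw [hΦzt, hΦwt, sub_div]; ring
      rw [ee]
      linarith

end DET

/-- **Separation of the two largest values of `Φ` persists between well-separated times.**
Fix `β > 1 + 1/(α-d)` and `λ_t = (log t)^(-β)`. Almost surely there is `t₀` such that whenever
`t₀ ≤ t₁ ≤ t₂`, `Z¹_{t₁} = Z¹_{t₂}` and `Φ_t(Z¹_t) - Φ_t(Z²_t) ≥ a_t λ_t / 2` holds at `t = t₁`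
and `t = t₂`, then it holds for all `t ∈ [t₁, t₂]`. -/
theorem separation_first_second (d : ℕ) (hd : 1 ≤ d) (α : ℝ) (hα : (d:ℝ) < α)
    {Ω : Type*} [MeasurableSpace Ω] (P : Measure Ω) [IsProbabilityMeasure P]
    (ξ : (Fin d → ℤ) → Ω → ℝ) (hξ : IsParetoPotential P α ξ)
    (β : ℝ) (hβ : 1 + 1 / (α - d) < β) :
    ∀ᵐ ω ∂P, ∀ Z1 Z2 : ℝ → (Fin d → ℤ),
      (∀ t : ℝ, 1 < t →
        (∀ z, Phi (fun w => ξ w ω) t z ≤ Phi (fun w => ξ w ω) t (Z1 t)) ∧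
        (∀ z, Phi (fun w => ξ w ω) t z = Phi (fun w => ξ w ω) t (Z1 t) →
          lnorm z ≤ lnorm (Z1 t)) ∧
        Z2 t ≠ Z1 t ∧
        (∀ z, z ≠ Z1 t → Phi (fun w => ξ w ω) t z ≤ Phi (fun w => ξ w ω) t (Z2 t)) ∧
        (∀ z, z ≠ Z1 t → Phi (fun w => ξ w ω) t z = Phi (fun w => ξ w ω) t (Z2 t) →
          lnorm z ≤ lnorm (Z2 t))) →
      ∃ t₀ : ℝ, 1 < t₀ ∧ ∀ t₁ t₂ : ℝ, t₀ ≤ t₁ → t₁ ≤ t₂ →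
        Z1 t₁ = Z1 t₂ →
        (1/2) * aScale α d t₁ * Real.log t₁ ^ (-β) ≤
          Phi (fun w => ξ w ω) t₁ (Z1 t₁) - Phi (fun w => ξ w ω) t₁ (Z2 t₁) →
        (1/2) * aScale α d t₂ * Real.log t₂ ^ (-β) ≤
          Phi (fun w => ξ w ω) t₂ (Z1 t₂) - Phi (fun w => ξ w ω) t₂ (Z2 t₂) →
        ∀ t ∈ Set.Icc t₁ t₂,
          (1/2) * aScale α d t * Real.log t ^ (-β) ≤
            Phi (fun w => ξ w ω) t (Z1 t) - Phi (fun w => ξ w ω) t (Z2 t) := by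
  filter_upwards [pareto_ae d hd α (by
    have : (0:ℝ) < d := by exact_mod_cast hd
    linarith) P ξ hξ
    (Real.exp (1 + (d:ℝ) * Real.log 3) * (1 + (d:ℝ) * Real.log 3) + 2)
    (by
      have h1 : (0:ℝ) ≤ (d:ℝ) * Real.log 3 :=
        mul_nonneg (by positivity) (Real.log_nonneg (by norm_num))
      nlinarith [Real.one_le_exp (by linarith : (0:ℝ) ≤ 1 + (d:ℝ) * Real.log 3)])] with ω hω
  intro Z1 Z2 H
  obtain ⟨hξ1, v₁, v₂, hv12, hv1, hv2⟩ := hω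
  obtain ⟨t₀, ht₀, hmain⟩ := KLMS.main_det d hd α β hα hβ (fun w => ξ w ω) hξ1 v₁ v₂ hv12
    hv1 hv2 Z1 Z2 H
  exact ⟨t₀, ht₀, hmain⟩
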